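/- arXiv:1605.06348 — 5 statements merged into one kernel-verified Lean document; each statement's English description precedes it below -/
import Mathlib

section
/- There exists a non-negative solution (p_{ij})_{-s \le i,j \le s} to the moment-matching equations \sum i^2 p_{ij} = 1, \sum j^2 p_{ij} = R^{-2}, \sum ij p_{ij} = R^{-1}\rho, \sum i p_{ij} = 0, \sum j p_{ij} = 0, \sum p_{ij} = 1 if and only if inf_{0 < z_1 < 2|\rho|/R} ( R^2 z_1 + max_{\xi \in S} (2\xi - \xi^2 z_1) ) \ge 2R|\rho|, where S = { i/j : 1 \le i,j \le s, i,j integers }. -/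
open Finset

noncomputable def grid (s : ℕ) : Finset (ℤ × ℤ) := Finset.Icc (-(s:ℤ)) s ×ˢ Finset.Icc (-(s:ℤ)) s

/-- Non-negative moment-matching solution for parameters `(R, ρ, s)`. -/
def IsMMSol (s : ℕ) (R ρ : ℝ) (p : ℤ × ℤ → ℝ) : Prop :=
  (∀ q ∈ grid s, q ≠ (0,0) → 0 ≤ p q) ∧
  (∑ q ∈ grid s, (q.1:ℝ)^2 * p q = 1) ∧
  (∑ q ∈ grid s, (q.2:ℝ)^2 * p q = (R⁻¹)^2) ∧
  (∑ q ∈ grid s, ((q.1:ℝ) * (q.2:ℝ)) * p q = R⁻¹ * ρ) ∧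
  (∑ q ∈ grid s, (q.1:ℝ) * p q = 0) ∧
  (∑ q ∈ grid s, (q.2:ℝ) * p q = 0) ∧
  (∑ q ∈ grid s, p q = 1)

/-- The set `S = {i/j : 1 ≤ i,j ≤ s}`. -/
noncomputable def Sset (s : ℕ) : Finset ℝ :=
  ((Finset.Icc 1 s) ×ˢ (Finset.Icc 1 s)).image fun q => (q.1 : ℝ) / (q.2 : ℝ)

theorem Sset_nonempty {s : ℕ} (hs : 1 ≤ s) : (Sset s).Nonempty := by
  refine ⟨1, Finset.mem_image.2 ⟨(1,1), ?_, by norm_num⟩⟩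
  simp [Finset.mem_product]
  omega

lemma mem_grid {s : ℕ} {q : ℤ×ℤ} : q ∈ grid s ↔ (-(s:ℤ) ≤ q.1 ∧ q.1 ≤ s) ∧ (-(s:ℤ) ≤ q.2 ∧ q.2 ≤ s) := by
  simp [grid, Finset.mem_product, Finset.mem_Icc]

noncomputable def mkP (L : List ((ℤ×ℤ)×ℝ)) : ℤ×ℤ → ℝ :=
  fun q => (L.map fun x => if q = x.1 then x.2 else 0).sum

lemma sum_mkP {s : ℕ} (L : List ((ℤ×ℤ)×ℝ)) (hL : ∀ x ∈ L, x.1 ∈ grid s) (f : ℤ×ℤ → ℝ) :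
    ∑ q ∈ grid s, f q * mkP L q = (L.map fun x => f x.1 * x.2).sum := by
  induction L with
  | nil => simp [mkP]
  | cons x L ih =>
    have hx : x.1 ∈ grid s := hL x (by simp)
    have ih' := ih (fun y hy => hL y (by simp [hy]))
    simp only [mkP, List.map_cons, List.sum_cons] at *
    rw [show (∑ q ∈ grid s, f q * ((if q = x.1 then x.2 else 0) +
        (List.map (fun y => if q = y.1 then y.2 else 0) L).sum)) =
        (∑ q ∈ grid s, f q * (if q = x.1 then x.2 else 0)) +
        ∑ q ∈ grid s, f q * (List.map (fun y => if q = y.1 then y.2 else 0) L).sum by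
      rw [← Finset.sum_add_distrib]; apply Finset.sum_congr rfl; intros; ring]
    rw [ih', Finset.sum_eq_single x.1]
    · simp
    · intro q hq hne; simp [hne]
    · intro h; exact absurd hx h

lemma build (s : ℕ) (R ρ : ℝ) (L : List ((ℤ×ℤ)×ℝ))
    (hL : ∀ x ∈ L, x.1 ∈ grid s)
    (hnn : ∀ x ∈ L, x.1 ≠ (0,0) → 0 ≤ x.2)
    (e1 : (L.map fun x => (x.1.1:ℝ)^2 * x.2).sum = 1)
    (e2 : (L.map fun x => (x.1.2:ℝ)^2 * x.2).sum = (R⁻¹)^2)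
    (e3 : (L.map fun x => ((x.1.1:ℝ) * (x.1.2:ℝ)) * x.2).sum = R⁻¹ * ρ)
    (e4 : (L.map fun x => (x.1.1:ℝ) * x.2).sum = 0)
    (e5 : (L.map fun x => (x.1.2:ℝ) * x.2).sum = 0)
    (e6 : (L.map fun x => x.2).sum = 1) :
    IsMMSol s R ρ (mkP L) := by
  refine ⟨?_, ?_, ?_, ?_, ?_, ?_, ?_⟩
  · intro q hq hne
    apply List.sum_nonneg
    intro y hy
    simp only [List.mem_map] at hy
    obtain ⟨x, hx, rfl⟩ := hy
    split
    · next h => exact hnn x hx (h ▸ hne)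
    · exact le_refl 0
  · exact (sum_mkP L hL (fun q => (q.1:ℝ)^2)).trans e1
  · exact (sum_mkP L hL (fun q => (q.2:ℝ)^2)).trans e2
  · exact (sum_mkP L hL (fun q => (q.1:ℝ) * (q.2:ℝ))).trans e3
  · exact (sum_mkP L hL (fun q => (q.1:ℝ))).trans e4
  · exact (sum_mkP L hL (fun q => (q.2:ℝ))).trans e5
  · calc ∑ q ∈ grid s, mkP L q = ∑ q ∈ grid s, (fun _ => (1:ℝ)) q * mkP L q := by simp
    _ = _ := by rw [sum_mkP L hL (fun _ => (1:ℝ))]; simpa using e6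

set_option maxHeartbeats 1000000 in
lemma exists_sol_of_weights (s : ℕ) (hs : 1 ≤ s) (R ρ : ℝ) (hR : 0 < R) (hρ : 0 ≤ ρ)
    (i₁ j₁ i₂ j₂ : ℕ)
    (hi₁ : 1 ≤ i₁) (hi₁' : i₁ ≤ s) (hj₁ : 1 ≤ j₁) (hj₁' : j₁ ≤ s)
    (hi₂ : 1 ≤ i₂) (hi₂' : i₂ ≤ s) (hj₂ : 1 ≤ j₂) (hj₂' : j₂ ≤ s)
    (μ₁ μ₂ : ℝ) (hμ₁ : 0 ≤ μ₁) (hμ₂ : 0 ≤ μ₂)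
    (h1 : μ₁*((i₁:ℝ)/(j₁:ℝ))^2 + μ₂*((i₂:ℝ)/(j₂:ℝ))^2 ≤ 1)
    (h2 : μ₁ + μ₂ ≤ (R⁻¹)^2)
    (h3 : μ₁*((i₁:ℝ)/(j₁:ℝ)) + μ₂*((i₂:ℝ)/(j₂:ℝ)) = R⁻¹*ρ) :
    ∃ p : ℤ × ℤ → ℝ, IsMMSol s R ρ p := by
  have hj₁0 : ((j₁:ℝ)) ≠ 0 := by positivity
  have hj₂0 : ((j₂:ℝ)) ≠ 0 := by positivity
  have hd₁0 : (0:ℝ) ≤ (1 - (μ₁*((i₁:ℝ)/(j₁:ℝ))^2 + μ₂*((i₂:ℝ)/(j₂:ℝ))^2))/2 := by linarith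
  have hd₂0 : (0:ℝ) ≤ ((R⁻¹)^2 - (μ₁ + μ₂))/2 := by linarith
  refine ⟨mkP
    [((( i₁:ℤ), ( j₁:ℤ)), μ₁/(2*(j₁:ℝ)^2)), (((-i₁:ℤ), (-j₁:ℤ)), μ₁/(2*(j₁:ℝ)^2)),
     ((( i₂:ℤ), ( j₂:ℤ)), μ₂/(2*(j₂:ℝ)^2)), (((-i₂:ℤ), (-j₂:ℤ)), μ₂/(2*(j₂:ℝ)^2)),
     (((1:ℤ),(0:ℤ)), (1 - (μ₁*((i₁:ℝ)/(j₁:ℝ))^2 + μ₂*((i₂:ℝ)/(j₂:ℝ))^2))/2),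
     (((-1:ℤ),(0:ℤ)), (1 - (μ₁*((i₁:ℝ)/(j₁:ℝ))^2 + μ₂*((i₂:ℝ)/(j₂:ℝ))^2))/2),
     (((0:ℤ),(1:ℤ)), ((R⁻¹)^2 - (μ₁ + μ₂))/2),
     (((0:ℤ),(-1:ℤ)), ((R⁻¹)^2 - (μ₁ + μ₂))/2),
     (((0:ℤ),(0:ℤ)), 1 - (μ₁/(2*(j₁:ℝ)^2)*2 + μ₂/(2*(j₂:ℝ)^2)*2
        + (1 - (μ₁*((i₁:ℝ)/(j₁:ℝ))^2 + μ₂*((i₂:ℝ)/(j₂:ℝ))^2))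
        + ((R⁻¹)^2 - (μ₁ + μ₂))))],
    build s R ρ _ ?_ ?_ ?_ ?_ ?_ ?_ ?_ ?_⟩
  · intro x hx
    fin_cases hx <;> simp [mem_grid] <;> omega
  · intro x hx
    fin_cases hx <;> simp_all <;> positivity
  · simp only [List.map_cons, List.map_nil, List.sum_cons, List.sum_nil]
    push_cast
    field_simp
    ring
  · simp only [List.map_cons, List.map_nil, List.sum_cons, List.sum_nil]
    push_cast
    field_simp
    ring
  · simp only [List.map_cons, List.map_nil, List.sum_cons, List.sum_nil]
    rw [← h3]
    push_cast
    field_simp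
    ring
  · simp only [List.map_cons, List.map_nil, List.sum_cons, List.sum_nil]
    push_cast
    ring
  · simp only [List.map_cons, List.map_nil, List.sum_cons, List.sum_nil]
    push_cast
    ring
  · simp only [List.map_cons, List.map_nil, List.sum_cons, List.sum_nil]
    push_cast
    field_simp
    ring
lemma mem_Sset {s i j : ℕ} (hi : 1 ≤ i) (hi' : i ≤ s) (hj : 1 ≤ j) (hj' : j ≤ s) :
    (i:ℝ)/(j:ℝ) ∈ Sset s :=
  Finset.mem_image.2 ⟨(i,j), by simp [Finset.mem_product, Finset.mem_Icc, hi, hi', hj, hj'], rfl⟩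

lemma Sset_elim {s : ℕ} {ξ : ℝ} (h : ξ ∈ Sset s) :
    ∃ i j : ℕ, 1 ≤ i ∧ i ≤ s ∧ 1 ≤ j ∧ j ≤ s ∧ ξ = (i:ℝ)/(j:ℝ) := by
  obtain ⟨⟨i,j⟩, hmem, rfl⟩ := Finset.mem_image.1 h
  simp only [Finset.mem_product, Finset.mem_Icc] at hmem
  exact ⟨i, j, hmem.1.1, hmem.1.2, hmem.2.1, hmem.2.2, rfl⟩

lemma Sset_pos {s : ℕ} {ξ : ℝ} (h : ξ ∈ Sset s) : 0 < ξ := by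
  obtain ⟨i, j, hi, hi', hj, hj', rfl⟩ := Sset_elim h
  have : (0:ℝ) < i := by exact_mod_cast hi
  have : (0:ℝ) < j := by exact_mod_cast hj
  positivity

lemma Sset_le {s : ℕ} {ξ : ℝ} (h : ξ ∈ Sset s) : ξ ≤ s := by
  obtain ⟨i, j, hi, hi', hj, hj', rfl⟩ := Sset_elim h
  have h1 : (1:ℝ) ≤ j := by exact_mod_cast hj
  have h2 : (i:ℝ) ≤ s := by exact_mod_cast hi'
  rw [div_le_iff₀ (by linarith)]
  nlinarith [Nat.cast_nonneg (α := ℝ) i]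

lemma Sset_inv_le {s : ℕ} {ξ : ℝ} (h : ξ ∈ Sset s) : 1/(s:ℝ) ≤ ξ := by
  obtain ⟨i, j, hi, hi', hj, hj', rfl⟩ := Sset_elim h
  have h1 : (1:ℝ) ≤ i := by exact_mod_cast hi
  have h2 : (j:ℝ) ≤ s := by exact_mod_cast hj'
  have h3 : (0:ℝ) < j := by linarith [show (1:ℝ) ≤ j from by exact_mod_cast hj]
  have h4 : (0:ℝ) < s := by linarith
  rw [div_le_div_iff₀ h4 h3]
  nlinarith

lemma int_prod_le {a b : ℤ} (sZ : ℤ) (ha : |a| ≤ sZ) (hb : |b| ≤ sZ) :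
    |a * b| ≤ sZ * a^2 := by
  rcases eq_or_ne a 0 with rfl | h0
  · simp
  · have h1 : 1 ≤ |a| := Int.one_le_abs h0
    have h2 : |a*b| = |a| * |b| := abs_mul a b
    have h3 : a^2 = |a| ^ 2 := (sq_abs a).symm
    have h4 : |a| * |b| ≤ |a| * sZ := mul_le_mul_of_nonneg_left hb (abs_nonneg a)
    have h5 : |a| * sZ ≤ (|a| ^ 2) * sZ := by
      have hsZ : 0 ≤ sZ := le_trans (abs_nonneg a) ha
      have : |a| ≤ |a| ^ 2 := by nlinarith
      exact mul_le_mul_of_nonneg_right this hsZ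
    rw [h2, h3]
    linarith

set_option maxHeartbeats 1600000 in
lemma forward_dir (s : ℕ) (hs : 1 ≤ s) (R ρ : ℝ) (hR : 0 < R)
    (p : ℤ × ℤ → ℝ) (hsol : IsMMSol s R ρ p) :
    ∀ z₁ : ℝ, 0 < z₁ → z₁ < 2 * |ρ| / R →
        2 * R * |ρ| ≤ R^2 * z₁ + (Sset s).sup' (Sset_nonempty hs) (fun ξ => 2*ξ - ξ^2*z₁) := by
  obtain ⟨hpos, hA, hB, hC, -, -, -⟩ := hsol
  have hRne : R ≠ 0 := ne_of_gt hR
  have hs1 : (1:ℝ) ≤ s := by exact_mod_cast hs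
  set σ : ℝ := if 0 ≤ ρ then 1 else -1 with hσ
  have hσρ : σ * ρ = |ρ| := by
    rcases le_or_gt 0 ρ with h | h
    · simp [hσ, h, abs_of_nonneg h]
    · simp [hσ, not_le.2 h, abs_of_neg h]
  have hσ1 : σ = 1 ∨ σ = -1 := by
    rcases le_or_gt 0 ρ with h | h
    · left; simp [hσ, h]
    · right; simp [hσ, not_le.2 h]
  clear_value σ
  -- bounds from grid membership
  have hgrid : ∀ q ∈ grid s, |q.1| ≤ (s:ℤ) ∧ |q.2| ≤ (s:ℤ) := by
    intro q hq
    rw [mem_grid] at hq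
    constructor <;> rw [abs_le] <;> omega
  -- Claim 1 : |ρ| * R⁻¹ ≤ s
  have claim1 : |ρ| * R⁻¹ ≤ s := by
    have key : ∀ q ∈ grid s, σ*((q.1:ℝ)*(q.2:ℝ)) * p q ≤ (s:ℝ) * (q.1:ℝ)^2 * p q := by
      intro q hq
      rcases eq_or_ne q (0,0) with rfl | hne
      · simp
      · have hp := hpos q hq hne
        have hb := int_prod_le (s:ℤ) (hgrid q hq).1 (hgrid q hq).2
        have hbR : |(q.1:ℝ)*(q.2:ℝ)| ≤ (s:ℝ)*(q.1:ℝ)^2 := by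
          have h' : ((|q.1 * q.2| : ℤ) : ℝ) ≤ ((s * q.1^2 : ℤ) : ℝ) := by exact_mod_cast hb
          push_cast at h'
          rwa [abs_mul] at h' ⊢
        have habs : σ*((q.1:ℝ)*(q.2:ℝ)) ≤ (s:ℝ)*(q.1:ℝ)^2 := by
          rcases hσ1 with h | h <;> rw [h] <;>
            nlinarith [le_abs_self ((q.1:ℝ)*(q.2:ℝ)), neg_abs_le ((q.1:ℝ)*(q.2:ℝ))]
        calc σ*((q.1:ℝ)*(q.2:ℝ)) * p q ≤ ((s:ℝ)*(q.1:ℝ)^2) * p q :=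
              mul_le_mul_of_nonneg_right habs hp
          _ = (s:ℝ) * (q.1:ℝ)^2 * p q := by ring
    have hsum := Finset.sum_le_sum key
    have hl : ∑ q ∈ grid s, σ*((q.1:ℝ)*(q.2:ℝ)) * p q = σ * (R⁻¹ * ρ) := by
      rw [← hC, Finset.mul_sum]
      exact Finset.sum_congr rfl (fun q _ => by ring)
    have hr : ∑ q ∈ grid s, (s:ℝ) * (q.1:ℝ)^2 * p q = (s:ℝ) := by
      calc ∑ q ∈ grid s, (s:ℝ)*(q.1:ℝ)^2*p q
          = ∑ q ∈ grid s, (s:ℝ)*((q.1:ℝ)^2*p q) :=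
            Finset.sum_congr rfl (fun q _ => by ring)
        _ = (s:ℝ) * ∑ q ∈ grid s, (q.1:ℝ)^2*p q := (Finset.mul_sum _ _ _).symm
        _ = (s:ℝ) := by rw [hA]; ring
    have : |ρ| * R⁻¹ = σ*(R⁻¹*ρ) := by rw [← hσρ]; ring
    rw [this, ← hl]
    rw [hr] at hsum
    exact hsum
  -- main part
  intro z₁ hz1 hz2
  set m := (Sset s).sup' (Sset_nonempty hs) (fun ξ => 2*ξ - ξ^2*z₁) with hm
  have hm_ge0 : ∀ ξ ∈ Sset s, 2*ξ - ξ^2*z₁ ≤ m := fun ξ h => Finset.le_sup' (fun ξ => 2*ξ - ξ^2*z₁) h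
  clear_value m
  have hm_ge : ∀ ξ ∈ Sset s, 2*ξ - ξ^2*z₁ ≤ m := hm_ge0
  have hz2' : z₁ < 2 * (|ρ| * R⁻¹) := by
    rw [div_eq_mul_inv, mul_assoc] at hz2; exact hz2
  have hz2s : z₁ < 2 * s := by linarith
  have hmem1s : (1:ℝ)/(s:ℝ) ∈ Sset s := by
    have := mem_Sset (s := s) (i := 1) (j := s) le_rfl hs hs le_rfl
    simpa using this
  have hspos : (0:ℝ) < s := by linarith
  have hm_pos : 0 < m := by
    have h1 := hm_ge _ hmem1s
    have h2 : (0:ℝ) < 2*((1:ℝ)/(s:ℝ)) - ((1:ℝ)/(s:ℝ))^2*z₁ := by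
      have hcalc : 2*((1:ℝ)/(s:ℝ)) - ((1:ℝ)/(s:ℝ))^2*z₁ = (2*(s:ℝ) - z₁)/(s:ℝ)^2 := by
        field_simp
      rw [hcalc]
      exact div_pos (by linarith) (by positivity)
    linarith
  -- pointwise key inequality
  have key : ∀ q ∈ grid s, 2*σ*((q.1:ℝ)*(q.2:ℝ))*p q ≤ (z₁*(q.1:ℝ)^2 + m*(q.2:ℝ)^2) * p q := by
    intro q hq
    rcases eq_or_ne q (0,0) with rfl | hne
    · simp
    · have hp := hpos q hq hne
      have hcoef : 2*σ*((q.1:ℝ)*(q.2:ℝ)) ≤ z₁*(q.1:ℝ)^2 + m*(q.2:ℝ)^2 := by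
        rcases eq_or_ne q.1 0 with h1 | h1
        · rw [h1]
          have : (0:ℝ) ≤ m*(q.2:ℝ)^2 := by positivity
          simpa using this
        rcases eq_or_ne q.2 0 with h2 | h2
        · rw [h2]
          have : (0:ℝ) ≤ z₁*(q.1:ℝ)^2 := by positivity
          simpa using this
        -- both nonzero
        have hqg := mem_grid.1 hq
        have hna1 : 1 ≤ q.1.natAbs := by omega
        have hna2 : 1 ≤ q.2.natAbs := by omega
        have hna1' : q.1.natAbs ≤ s := by omega
        have hna2' : q.2.natAbs ≤ s := by omega
        have hmemξ := mem_Sset (s := s) hna1 hna1' hna2 hna2'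
        have hξ := hm_ge _ hmemξ
        set a : ℝ := (q.1.natAbs : ℝ) with ha
        set bb : ℝ := (q.2.natAbs : ℝ) with hbb
        have hbpos : 0 < bb := by rw [hbb]; exact_mod_cast hna2
        have hapos : 0 < a := by rw [ha]; exact_mod_cast hna1
        have hax : a = |(q.1:ℝ)| := by
          rw [ha, Nat.cast_natAbs]; push_cast; rfl
        have hbx : bb = |(q.2:ℝ)| := by
          rw [hbb, Nat.cast_natAbs]; push_cast; rfl
        have hsq1 : (q.1:ℝ)^2 = a^2 := by rw [hax, sq_abs]
        have hsq2 : (q.2:ℝ)^2 = bb^2 := by rw [hbx, sq_abs]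
        -- from hξ : 2*(a/bb) - (a/bb)^2*z₁ ≤ m
        have hmul : 2*a*bb - a^2*z₁ ≤ m*bb^2 := by
          have hmm := mul_le_mul_of_nonneg_right hξ (sq_nonneg bb)
          have hbne : bb ≠ 0 := ne_of_gt hbpos
          have heq : (2*(a/bb) - (a/bb)^2*z₁) * bb^2 = 2*a*bb - a^2*z₁ := by
            field_simp
          rw [heq] at hmm
          exact hmm
        have hprod : σ*((q.1:ℝ)*(q.2:ℝ)) ≤ a*bb := by
          have habs2 : |(q.1:ℝ)*(q.2:ℝ)| = a*bb := by
            rw [abs_mul, hax, hbx]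
          rcases hσ1 with h | h <;> rw [h] <;>
            linarith [le_abs_self ((q.1:ℝ)*(q.2:ℝ)), neg_abs_le ((q.1:ℝ)*(q.2:ℝ)), habs2.le, habs2.ge]
        rw [hsq1, hsq2]
        nlinarith [hmul, hprod]
      exact mul_le_mul_of_nonneg_right hcoef hp
  have hsum := Finset.sum_le_sum key
  have hl2 : ∑ q ∈ grid s, 2*σ*((q.1:ℝ)*(q.2:ℝ))*p q = 2*σ*(R⁻¹*ρ) := by
    rw [← hC, Finset.mul_sum]
    exact Finset.sum_congr rfl (fun q _ => by ring)
  have hr2 : ∑ q ∈ grid s, (z₁*(q.1:ℝ)^2 + m*(q.2:ℝ)^2) * p q = z₁ + m*(R⁻¹)^2 := by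
    calc ∑ q ∈ grid s, (z₁*(q.1:ℝ)^2 + m*(q.2:ℝ)^2) * p q
        = ∑ q ∈ grid s, (z₁*((q.1:ℝ)^2*p q) + m*((q.2:ℝ)^2*p q)) :=
          Finset.sum_congr rfl (fun q _ => by ring)
      _ = z₁ * ∑ q ∈ grid s, (q.1:ℝ)^2*p q + m * ∑ q ∈ grid s, (q.2:ℝ)^2*p q := by
          rw [Finset.sum_add_distrib, Finset.mul_sum, Finset.mul_sum]
      _ = z₁ + m*(R⁻¹)^2 := by rw [hA, hB]; ring
  rw [hl2, hr2] at hsum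
  have hfin : 2*(|ρ| * R⁻¹) ≤ z₁ + m*(R⁻¹)^2 := by
    have : 2*σ*(R⁻¹*ρ) = 2*(|ρ| * R⁻¹) := by rw [← hσρ]; ring
    linarith [this ▸ hsum]
  have hR2 : (0:ℝ) < R^2 := by positivity
  calc 2*R*|ρ| = R^2 * (2*(|ρ| * R⁻¹)) := by field_simp
    _ ≤ R^2 * (z₁ + m*(R⁻¹)^2) := mul_le_mul_of_nonneg_left hfin (le_of_lt hR2)
    _ = R^2*z₁ + m := by field_simp


lemma sum_reflect (s : ℕ) (f : ℤ×ℤ → ℝ) :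
    ∑ q ∈ grid s, f (q.1, -q.2) = ∑ q ∈ grid s, f q := by
  apply Finset.sum_nbij' (i := fun q : ℤ×ℤ => (q.1, -q.2)) (j := fun q : ℤ×ℤ => (q.1, -q.2))
  · intro q hq; rw [mem_grid] at *; dsimp only; omega
  · intro q hq; rw [mem_grid] at *; dsimp only; omega
  · intro q hq; simp
  · intro q hq; simp
  · intro q hq; rfl

lemma reflect_sol {s : ℕ} {R ρ : ℝ} {p : ℤ×ℤ → ℝ} (h : IsMMSol s R ρ p) :
    IsMMSol s R (-ρ) (fun q => p (q.1, -q.2)) := by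
  obtain ⟨h0, h1, h2, h3, h4, h5, h6⟩ := h
  refine ⟨?_, ?_, ?_, ?_, ?_, ?_, ?_⟩
  · intro q hq hne
    obtain ⟨a, b⟩ := q
    apply h0 (a, -b)
    · rw [mem_grid] at hq ⊢; dsimp only; omega
    · simp only [ne_eq, Prod.mk.injEq] at hne ⊢
      omega
  · calc ∑ q ∈ grid s, (q.1:ℝ)^2 * p (q.1, -q.2)
        = ∑ q ∈ grid s, (q.1:ℝ)^2 * p q := sum_reflect s (fun r : ℤ×ℤ => (r.1:ℝ)^2 * p r)
      _ = 1 := h1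
  · calc ∑ q ∈ grid s, (q.2:ℝ)^2 * p (q.1, -q.2)
        = ∑ q ∈ grid s, ((-(-q.2):ℤ):ℝ)^2 * p (q.1, -q.2) :=
          Finset.sum_congr rfl (fun q _ => by push_cast; ring)
      _ = ∑ q ∈ grid s, ((-q.2:ℤ):ℝ)^2 * p q := sum_reflect s (fun r : ℤ×ℤ => ((-r.2:ℤ):ℝ)^2 * p r)
      _ = ∑ q ∈ grid s, (q.2:ℝ)^2 * p q := Finset.sum_congr rfl (fun q _ => by push_cast; ring)
      _ = (R⁻¹)^2 := h2
  · calc ∑ q ∈ grid s, ((q.1:ℝ) * (q.2:ℝ)) * p (q.1, -q.2)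
        = ∑ q ∈ grid s, ((q.1:ℝ) * ((-(-q.2):ℤ):ℝ)) * p (q.1, -q.2) :=
          Finset.sum_congr rfl (fun q _ => by push_cast; ring)
      _ = ∑ q ∈ grid s, ((q.1:ℝ) * ((-q.2:ℤ):ℝ)) * p q :=
          sum_reflect s (fun r : ℤ×ℤ => ((r.1:ℝ) * ((-r.2:ℤ):ℝ)) * p r)
      _ = -∑ q ∈ grid s, ((q.1:ℝ) * (q.2:ℝ)) * p q := by
          rw [← Finset.sum_neg_distrib]
          exact Finset.sum_congr rfl (fun q _ => by push_cast; ring)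
      _ = R⁻¹ * (-ρ) := by rw [h3]; ring
  · calc ∑ q ∈ grid s, (q.1:ℝ) * p (q.1, -q.2)
        = ∑ q ∈ grid s, (q.1:ℝ) * p q := sum_reflect s (fun r : ℤ×ℤ => (r.1:ℝ) * p r)
      _ = 0 := h4
  · calc ∑ q ∈ grid s, (q.2:ℝ) * p (q.1, -q.2)
        = ∑ q ∈ grid s, -(((-q.2:ℤ):ℝ) * p (q.1, -q.2)) :=
          Finset.sum_congr rfl (fun q _ => by push_cast; ring)
      _ = -∑ q ∈ grid s, ((-q.2:ℤ):ℝ) * p (q.1, -q.2) := by rw [Finset.sum_neg_distrib]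
      _ = -∑ q ∈ grid s, (q.2:ℝ) * p q :=
          congrArg Neg.neg (sum_reflect s (fun r : ℤ×ℤ => (r.2:ℝ) * p r))
      _ = 0 := by rw [h5]; ring
  · calc ∑ q ∈ grid s, p (q.1, -q.2)
        = ∑ q ∈ grid s, p q := sum_reflect s (fun r : ℤ×ℤ => p r)
      _ = 1 := h6

set_option maxHeartbeats 1600000 in
lemma backward_dir (s : ℕ) (hs : 1 ≤ s) (R ρ : ℝ) (hR : 0 < R)
    (hρ0 : 0 ≤ ρ) (hρ1 : ρ ≤ 1)
    (h : ∀ z₁ : ℝ, 0 < z₁ → z₁ < 2 * |ρ| / R →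
        2 * R * |ρ| ≤ R^2 * z₁ + (Sset s).sup' (Sset_nonempty hs) (fun ξ => 2*ξ - ξ^2*z₁)) :
    ∃ p : ℤ × ℤ → ℝ, IsMMSol s R ρ p := by
  classical
  have hRne : R ≠ 0 := ne_of_gt hR
  have hs1 : (1:ℝ) ≤ s := by exact_mod_cast hs
  have hspos : (0:ℝ) < s := by linarith
  set t : ℝ := ρ * R⁻¹ with ht
  set b : ℝ := (R⁻¹)^2 with hb
  have hbpos : 0 < b := by rw [hb]; positivity
  have ht0 : 0 ≤ t := by rw [ht]; positivity
  have ht2b : t^2 ≤ b := by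
    rw [ht, hb]
    have : ρ^2 ≤ 1 := by nlinarith
    have hRi : (0:ℝ) < R⁻¹ := by positivity
    nlinarith [sq_nonneg R⁻¹]
  have habs : |ρ| = ρ := abs_of_nonneg hρ0
  -- reformulated condition
  have hcond : ∀ z₁ : ℝ, 0 < z₁ → z₁ < 2*t →
      ∃ ξ ∈ Sset s, 2*t ≤ z₁ + b*(2*ξ - ξ^2*z₁) := by
    intro z₁ hz1 hz2
    have hz2' : z₁ < 2 * |ρ| / R := by
      rw [habs, div_eq_mul_inv]
      calc z₁ < 2*t := hz2
        _ = 2*ρ*R⁻¹ := by rw [ht]; ring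
    have h1 := h z₁ hz1 hz2'
    obtain ⟨ξ, hξmem, hξeq⟩ := Finset.exists_mem_eq_sup' (Sset_nonempty hs) (fun ξ => 2*ξ - ξ^2*z₁)
    refine ⟨ξ, hξmem, ?_⟩
    rw [hξeq] at h1
    rw [habs] at h1
    have h2 := mul_le_mul_of_nonneg_left h1 (le_of_lt hbpos)
    calc 2*t = b * (2*R*ρ) := by rw [ht, hb]; field_simp
      _ ≤ b * (R^2*z₁ + (2*ξ - ξ^2*z₁)) := h2
      _ = z₁ + b*(2*ξ - ξ^2*z₁) := by rw [hb]; field_simp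
  clear_value t b
  -- Step b : t ≤ b * s
  have stepb : t ≤ b * s := by
    by_contra hbs
    push_neg at hbs
    have hbspos : 0 < b * s := by positivity
    have htpos : 0 < t := lt_trans hbspos hbs
    set z₁ : ℝ := min t (2*(t - b*s)) with hz₁
    have hz1pos : 0 < z₁ := lt_min htpos (by linarith)
    have hz1lt : z₁ < 2*t := lt_of_le_of_lt (min_le_left _ _) (by linarith)
    obtain ⟨ξ, hξmem, hξ⟩ := hcond z₁ hz1pos hz1lt
    have hξpos := Sset_pos hξmem
    have hξle := Sset_le hξmem
    have h1 : z₁ ≤ 2*(t - b*s) := min_le_right _ _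
    have h2 : b*(2*ξ - ξ^2*z₁) < 2*(b*s) := by
      have e1 : 0 < b*ξ^2*z₁ := by positivity
      have e2 : b*ξ ≤ b*s := mul_le_mul_of_nonneg_left hξle (le_of_lt hbpos)
      nlinarith
    linarith
  -- Step c : t ≤ s
  have stepc : t ≤ (s:ℝ) := by
    by_contra hts
    push_neg at hts
    have htpos : 0 < t := lt_trans hspos hts
    have htξ : ∀ ξ ∈ Sset s, 1 < t*ξ := by
      intro ξ hξmem
      have h1 := Sset_inv_le hξmem
      have h2 : t * (1/(s:ℝ)) ≤ t*ξ := mul_le_mul_of_nonneg_left h1 (le_of_lt htpos)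
      have h3 : 1 < t * (1/(s:ℝ)) := by
        rw [mul_one_div, lt_div_iff₀ hspos]
        linarith
      linarith
    set δ : ℝ := (Sset s).inf' (Sset_nonempty hs) (fun ξ => b*ξ*(t*ξ-1)/(1+b*ξ^2)) with hδ
    have hδpos : 0 < δ := by
      rw [hδ, Finset.lt_inf'_iff]
      intro ξ hξmem
      have h1 := Sset_pos hξmem
      have h2 := htξ ξ hξmem
      have h3 : 0 < t*ξ - 1 := by linarith
      positivity
    set z₁ : ℝ := 2*t - min δ t with hz₁
    have hmpos : 0 < min δ t := lt_min hδpos htpos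
    have hz1pos : 0 < z₁ := by
      rw [hz₁]
      have : min δ t ≤ t := min_le_right _ _
      linarith
    have hz1lt : z₁ < 2*t := by rw [hz₁]; linarith
    obtain ⟨ξ, hξmem, hξ⟩ := hcond z₁ hz1pos hz1lt
    have hξpos := Sset_pos hξmem
    have h2 := htξ ξ hξmem
    have hδle : δ ≤ b*ξ*(t*ξ-1)/(1+b*ξ^2) :=
      Finset.inf'_le (fun ξ => b*ξ*(t*ξ-1)/(1+b*ξ^2)) hξmem
    have hden : 0 < 1 + b*ξ^2 := by positivity
    have hδle' : δ * (1+b*ξ^2) ≤ b*ξ*(t*ξ-1) := by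
      rw [← le_div_iff₀ hden]; exact hδle
    have hmm : min δ t ≤ δ := min_le_left _ _
    have hm2 : min δ t * (1+b*ξ^2) ≤ b*ξ*(t*ξ-1) := by
      calc min δ t * (1+b*ξ^2) ≤ δ * (1+b*ξ^2) :=
            mul_le_mul_of_nonneg_right hmm (le_of_lt hden)
        _ ≤ b*ξ*(t*ξ-1) := hδle'
    -- hξ : 2t ≤ (2t - min δ t) + b*(2ξ - ξ²(2t - min δ t))
    rw [hz₁] at hξ
    have hbξ : 0 < b*ξ := by positivity
    nlinarith [mul_pos hbξ (show (0:ℝ) < t*ξ - 1 by linarith)]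
  -- Step d : main construction
  by_cases hsp : ∃ ξ ∈ Sset s, t ≤ b*ξ ∧ t*ξ ≤ 1
  · -- single point
    obtain ⟨ξ, hξmem, hbξ, htξ⟩ := hsp
    have hξpos := Sset_pos hξmem
    obtain ⟨i, j, hi, hi', hj, hj', hξeq⟩ := Sset_elim hξmem
    have hipos : (0:ℝ) < i := by exact_mod_cast hi
    have hjpos : (0:ℝ) < j := by exact_mod_cast hj
    apply exists_sol_of_weights s hs R ρ hR hρ0 i j i j hi hi' hj hj' hi hi' hj hj'
      (t*(j:ℝ)/(i:ℝ)) 0 (by positivity) le_rfl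
    · rw [← hξeq]
      have : t*(j:ℝ)/(i:ℝ) * ξ^2 = t*ξ := by
        rw [hξeq]; field_simp; try ring
      rw [this]; linarith
    · rw [← hb]
      have : t*(j:ℝ)/(i:ℝ) = t/ξ := by rw [hξeq]; field_simp
      rw [this, add_zero, div_le_iff₀ hξpos]
      linarith [mul_comm b ξ]
    · rw [← hξeq]
      have : t*(j:ℝ)/(i:ℝ) * ξ = t := by rw [hξeq]; field_simp; try ring
      rw [this, zero_mul, add_zero, ht]
      try ring
  · -- two points
    push_neg at hsp
    set S₁ := (Sset s).filter (fun ξ => t*ξ ≤ 1) with hS₁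
    set S₂ := (Sset s).filter (fun ξ => t ≤ b*ξ) with hS₂
    have hmem_s : (s:ℝ) ∈ Sset s := by
      have := mem_Sset (s := s) (i := s) (j := 1) hs le_rfl le_rfl hs
      simpa using this
    have hmem_1s : (1:ℝ)/(s:ℝ) ∈ Sset s := by
      have := mem_Sset (s := s) (i := 1) (j := s) le_rfl hs hs le_rfl
      simpa using this
    have hS₁ne : S₁.Nonempty := by
      refine ⟨(1:ℝ)/(s:ℝ), Finset.mem_filter.2 ⟨hmem_1s, ?_⟩⟩
      rw [mul_one_div, div_le_one hspos]
      exact stepc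
    have hS₂ne : S₂.Nonempty := by
      refine ⟨(s:ℝ), Finset.mem_filter.2 ⟨hmem_s, ?_⟩⟩
      exact stepb
    set ξ₁ := S₁.max' hS₁ne with hξ₁def
    set ξ₂ := S₂.min' hS₂ne with hξ₂def
    have hξ₁mem' : ξ₁ ∈ S₁ := S₁.max'_mem hS₁ne
    have hξ₂mem' : ξ₂ ∈ S₂ := S₂.min'_mem hS₂ne
    have hξ₁mem : ξ₁ ∈ Sset s := (Finset.mem_filter.1 hξ₁mem').1
    have hξ₂mem : ξ₂ ∈ Sset s := (Finset.mem_filter.1 hξ₂mem').1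
    have htξ₁ : t*ξ₁ ≤ 1 := (Finset.mem_filter.1 hξ₁mem').2
    have htbξ₂ : t ≤ b*ξ₂ := (Finset.mem_filter.1 hξ₂mem').2
    have hξ₁pos := Sset_pos hξ₁mem
    have hξ₂pos := Sset_pos hξ₂mem
    have hbξ₁ : b*ξ₁ < t := by
      by_contra hc
      push_neg at hc
      exact absurd htξ₁ (not_le.2 (hsp ξ₁ hξ₁mem hc))
    have htξ₂ : 1 < t*ξ₂ := hsp ξ₂ hξ₂mem htbξ₂
    have hξ₁ξ₂ : ξ₁ < ξ₂ := by
      by_contra hc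
      push_neg at hc
      have : b*ξ₂ ≤ b*ξ₁ := mul_le_mul_of_nonneg_left hc (le_of_lt hbpos)
      linarith
    have htpos : 0 < t := by nlinarith
    have cover : ∀ ξ ∈ Sset s, ξ ≤ ξ₁ ∨ ξ₂ ≤ ξ := by
      intro ξ hξmem
      by_cases hc : t*ξ ≤ 1
      · left
        exact S₁.le_max' ξ (Finset.mem_filter.2 ⟨hξmem, hc⟩)
      · right
        push_neg at hc
        have hbc : t ≤ b*ξ := by
          by_contra hbc
          push_neg at hbc
          have hξpos := Sset_pos hξmem
          nlinarith
        exact S₂.min'_le ξ (Finset.mem_filter.2 ⟨hξmem, hbc⟩)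
    have hsumpos : 0 < ξ₁ + ξ₂ := by linarith
    set z₁ : ℝ := 2/(ξ₁+ξ₂) with hz₁
    have hz1pos : 0 < z₁ := by rw [hz₁]; positivity
    have hz1eq : z₁ * (ξ₁+ξ₂) = 2 := by rw [hz₁]; field_simp
    have hz1lt : z₁ < 2*t := by
      rw [hz₁, div_lt_iff₀ hsumpos]
      nlinarith
    obtain ⟨ξ, hξmem, hξ⟩ := hcond z₁ hz1pos hz1lt
    have hξpos := Sset_pos hξmem
    have hbound : (2*ξ - ξ^2*z₁) * (ξ₁+ξ₂) ≤ 2*ξ₁*ξ₂ := by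
      rcases cover ξ hξmem with hc | hc
      · nlinarith [mul_nonneg (sub_nonneg.2 hc) (le_of_lt (sub_pos.2 (lt_of_le_of_lt hc hξ₁ξ₂)))]
      · nlinarith [mul_nonneg (sub_nonneg.2 hc) (le_of_lt (sub_pos.2 (lt_of_lt_of_le hξ₁ξ₂ hc)))]
    have hkey : t*(ξ₁+ξ₂) ≤ 1 + b*ξ₁*ξ₂ := by
      have h3 := mul_le_mul_of_nonneg_right hξ (le_of_lt hsumpos)
      have h4 := mul_le_mul_of_nonneg_left hbound (le_of_lt hbpos)
      nlinarith
    -- construct the two-point solution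
    have hd : 0 < ξ₂ - ξ₁ := by linarith
    obtain ⟨i₁, j₁, hi₁, hi₁', hj₁, hj₁', hξ₁eq⟩ := Sset_elim hξ₁mem
    obtain ⟨i₂, j₂, hi₂, hi₂', hj₂, hj₂', hξ₂eq⟩ := Sset_elim hξ₂mem
    apply exists_sol_of_weights s hs R ρ hR hρ0 i₁ j₁ i₂ j₂ hi₁ hi₁' hj₁ hj₁' hi₂ hi₂' hj₂ hj₂'
      ((b*ξ₂ - t)/(ξ₂-ξ₁)) ((t - b*ξ₁)/(ξ₂-ξ₁))
      (div_nonneg (by linarith) (le_of_lt hd)) (div_nonneg (by linarith) (le_of_lt hd))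
    · rw [← hξ₁eq, ← hξ₂eq]
      have heq : (b*ξ₂ - t)/(ξ₂-ξ₁) * ξ₁^2 + (t - b*ξ₁)/(ξ₂-ξ₁) * ξ₂^2
          = t*(ξ₁+ξ₂) - b*ξ₁*ξ₂ := by
        field_simp
        ring
      rw [heq]
      linarith
    · rw [← hb]
      have heq : (b*ξ₂ - t)/(ξ₂-ξ₁) + (t - b*ξ₁)/(ξ₂-ξ₁) = b := by
        field_simp
        ring
      linarith [heq]
    · rw [← hξ₁eq, ← hξ₂eq]
      have heq : (b*ξ₂ - t)/(ξ₂-ξ₁) * ξ₁ + (t - b*ξ₁)/(ξ₂-ξ₁) * ξ₂ = t := by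
        field_simp
        ring
      rw [heq, ht]
      ring

theorem markov_chain_locality_iff (s : ℕ) (hs : 1 ≤ s) (R ρ : ℝ) (hR : 0 < R)
    (hρ : ρ ∈ Set.Icc (-1:ℝ) 1) :
    (∃ p : ℤ × ℤ → ℝ, IsMMSol s R ρ p) ↔
      (∀ z₁ : ℝ, 0 < z₁ → z₁ < 2 * |ρ| / R →
        2 * R * |ρ| ≤ R^2 * z₁ + (Sset s).sup' (Sset_nonempty hs) (fun ξ => 2*ξ - ξ^2*z₁)) := by
  constructor
  · rintro ⟨p, hp⟩
    exact forward_dir s hs R ρ hR p hp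
  · intro h
    rcases le_or_gt 0 ρ with hρ0 | hρ0
    · exact backward_dir s hs R ρ hR hρ0 hρ.2 h
    · have h' : ∀ z₁ : ℝ, 0 < z₁ → z₁ < 2 * |(-ρ)| / R →
          2 * R * |(-ρ)| ≤ R^2 * z₁ + (Sset s).sup' (Sset_nonempty hs) (fun ξ => 2*ξ - ξ^2*z₁) := by
        simpa [abs_neg] using h
      obtain ⟨p, hp⟩ := backward_dir s hs R (-ρ) hR (by linarith) (by linarith [hρ.1]) h'
      refine ⟨fun q => p (q.1, -q.2), ?_⟩
      have h2 := reflect_sol hp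
      simpa using h2
end

section
/- If s < |\rho| \cdot max(R, 1/R), then there is no non-negative solution (p_{ij})_{-s \le i,j \le s} to the moment-matching equations \sum i^2 p_{ij} = 1, \sum j^2 p_{ij} = R^{-2}, \sum ij p_{ij} = R^{-1}\rho, \sum i p_{ij} = 0, \sum j p_{ij} = 0, \sum p_{ij} = 1. -/
open Finset

theorem no_solution_of_small_stencil (s : ℕ) (hs : 1 ≤ s) (R ρ : ℝ) (hR : 0 < R)
    (hρ : ρ ∈ Set.Icc (-1:ℝ) 1) (hsmall : (s : ℝ) < |ρ| * max R R⁻¹) :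
    ¬ ∃ p : ℤ × ℤ → ℝ, IsMMSol s R ρ p := by
  rintro ⟨p, hpos, h2i, h2j, hij, -, -, -⟩
  have hmem : ∀ q ∈ grid s, |(q.1 : ℝ)| ≤ s ∧ |(q.2 : ℝ)| ≤ s := by
    intro q hq
    simp only [grid, Finset.mem_product, Finset.mem_Icc] at hq
    constructor
    · rw [← Int.cast_abs]; exact_mod_cast abs_le.2 hq.1
    · rw [← Int.cast_abs]; exact_mod_cast abs_le.2 hq.2
  have habs : ∀ z : ℤ, |(z : ℝ)| ≤ (z : ℝ) ^ 2 := by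
    intro z
    have h1 : |z| ≤ z ^ 2 := by nlinarith [sq_abs z, abs_nonneg z]
    have : |(z:ℝ)| ≤ ((z ^ 2 : ℤ) : ℝ) := by rw [← Int.cast_abs]; exact_mod_cast h1
    simpa using this
  have hb2 : |R⁻¹ * ρ| ≤ (s : ℝ) * (R⁻¹) ^ 2 := by
    rw [← hij, ← h2j, Finset.mul_sum]
    refine (Finset.abs_sum_le_sum_abs _ _).trans (Finset.sum_le_sum ?_)
    intro q hq
    by_cases h0 : q = (0, 0)
    · subst h0; simp
    · have hp := hpos q hq h0
      rw [abs_mul, abs_of_nonneg hp, abs_mul]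
      have h1 : |(q.1:ℝ)| * |(q.2:ℝ)| ≤ (s:ℝ) * (q.2:ℝ)^2 :=
        mul_le_mul (hmem q hq).1 (habs q.2) (abs_nonneg _) (Nat.cast_nonneg s)
      calc |(q.1:ℝ)| * |(q.2:ℝ)| * p q ≤ ((s:ℝ) * (q.2:ℝ)^2) * p q :=
            mul_le_mul_of_nonneg_right h1 hp
        _ = (s:ℝ) * ((q.2:ℝ)^2 * p q) := by ring
  have hb1 : |R⁻¹ * ρ| ≤ (s : ℝ) * 1 := by
    rw [← hij, ← h2i, Finset.mul_sum]
    refine (Finset.abs_sum_le_sum_abs _ _).trans (Finset.sum_le_sum ?_)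
    intro q hq
    by_cases h0 : q = (0, 0)
    · subst h0; simp
    · have hp := hpos q hq h0
      rw [abs_mul, abs_of_nonneg hp, abs_mul]
      have h1 : |(q.1:ℝ)| * |(q.2:ℝ)| ≤ (s:ℝ) * (q.1:ℝ)^2 := by
        calc |(q.1:ℝ)| * |(q.2:ℝ)| = |(q.2:ℝ)| * |(q.1:ℝ)| := by ring
          _ ≤ (s:ℝ) * (q.1:ℝ)^2 :=
            mul_le_mul (hmem q hq).2 (habs q.1) (abs_nonneg _) (Nat.cast_nonneg s)
      calc |(q.1:ℝ)| * |(q.2:ℝ)| * p q ≤ ((s:ℝ) * (q.1:ℝ)^2) * p q :=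
            mul_le_mul_of_nonneg_right h1 hp
        _ = (s:ℝ) * ((q.1:ℝ)^2 * p q) := by ring
  have hRi : 0 < R⁻¹ := inv_pos.2 hR
  rw [abs_mul, abs_of_pos hRi] at hb1 hb2
  rcases max_cases R R⁻¹ with ⟨he, -⟩ | ⟨he, -⟩ <;> rw [he] at hsmall
  · have h1 : |ρ| * R ≤ s := by
      have h := mul_le_mul_of_nonneg_left hb2 (sq_nonneg R)
      have hR2 : R ^ 2 * (R⁻¹ * |ρ|) = |ρ| * R := by field_simp
      have hR2' : R ^ 2 * ((s:ℝ) * R⁻¹^2) = s := by field_simp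
      rw [hR2, hR2'] at h
      exact h
    linarith
  · nlinarith [hb1]
end

section
/- If R \in S = { i/j : 1 \le i,j \le s }, then for every \rho \in [-1,1] the inequality inf_{0 < z_1 < 2|\rho|/R} ( R^2 z_1 + max_{\xi \in S} (2\xi - \xi^2 z_1) ) \ge 2R|\rho| holds; i.e., a non-negative moment-matching solution exists for all correlations when R is a ratio of integers at most s. -/
open Finset

set_option maxHeartbeats 2000000 in
theorem rational_ratio_always_monotone (s : ℕ) (hs : 1 ≤ s) (R ρ : ℝ) (hR : 0 < R)
    (hρ : ρ ∈ Set.Icc (-1:ℝ) 1) (hRS : R ∈ Sset s) :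
    (∀ z₁ : ℝ, 0 < z₁ → z₁ < 2 * |ρ| / R →
        2 * R * |ρ| ≤ R^2 * z₁ + (Sset s).sup' (Sset_nonempty hs) (fun ξ => 2*ξ - ξ^2*z₁)) ∧
      ∃ p : ℤ × ℤ → ℝ, IsMMSol s R ρ p := by
  classical
  obtain ⟨ρ1, ρ2⟩ := hρ
  obtain ⟨⟨i, j⟩, hmem, hij⟩ := Finset.mem_image.1 hRS
  simp only [Finset.mem_product, Finset.mem_Icc] at hmem
  obtain ⟨⟨hi1, his⟩, hj1, hjs⟩ := hmem
  have hi0 : (0:ℝ) < (i:ℝ) := by exact_mod_cast Nat.lt_of_lt_of_le Nat.zero_lt_one hi1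
  have hj0 : (0:ℝ) < (j:ℝ) := by exact_mod_cast Nat.lt_of_lt_of_le Nat.zero_lt_one hj1
  have hi1' : (1:ℝ) ≤ (i:ℝ) := by exact_mod_cast hi1
  have hRij : R = (i:ℝ) / (j:ℝ) := hij.symm
  have hρabs : |ρ| ≤ 1 := abs_le.2 ⟨ρ1, ρ2⟩
  constructor
  · intro z₁ hz1 hz2
    have hsup : 2*R - R^2*z₁ ≤ (Sset s).sup' (Sset_nonempty hs) (fun ξ => 2*ξ - ξ^2*z₁) :=
      Finset.le_sup' (fun ξ => 2*ξ - ξ^2*z₁) hRS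
    nlinarith
  · set α : ℝ := (1+ρ)/(4*(i:ℝ)^2) with hα
    set β : ℝ := (1-ρ)/(4*(i:ℝ)^2) with hβ
    set γ : ℝ := 1 - 1/(i:ℝ)^2 with hγ
    have hα0 : 0 ≤ α := by apply div_nonneg <;> nlinarith
    have hβ0 : 0 ≤ β := by apply div_nonneg <;> nlinarith
    have hγ0 : 0 ≤ γ := by
      have h2 : 1/(i:ℝ)^2 ≤ 1 := by
        rw [div_le_one (by positivity)]; nlinarith
      rw [hγ]; try linarith
    have hg1 : ((i:ℤ),(j:ℤ)) ∈ grid s := by simp [grid]; omega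
    have hg2 : (-(i:ℤ),-(j:ℤ)) ∈ grid s := by simp [grid]; omega
    have hg3 : ((i:ℤ),-(j:ℤ)) ∈ grid s := by simp [grid]; omega
    have hg4 : (-(i:ℤ),(j:ℤ)) ∈ grid s := by simp [grid]; omega
    have hg5 : ((0:ℤ),(0:ℤ)) ∈ grid s := by simp [grid]
    refine ⟨fun q => (if q = ((i:ℤ), (j:ℤ)) then α else 0)
      + (if q = (-(i:ℤ), -(j:ℤ)) then α else 0)
      + (if q = ((i:ℤ), -(j:ℤ)) then β else 0)
      + (if q = (-(i:ℤ), (j:ℤ)) then β else 0)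
      + (if q = ((0:ℤ),(0:ℤ)) then γ else 0), ?_, ?_, ?_, ?_, ?_, ?_, ?_⟩
    · intro q _ _
      dsimp only
      split_ifs <;> linarith
    all_goals
      simp only [mul_add, mul_ite, mul_zero, Finset.sum_add_distrib, Finset.sum_ite_eq',
        hg1, hg2, hg3, hg4, hg5, if_true]
      push_cast
      simp only [hRij, hα, hβ, hγ]
      try field_simp
      try ring
end

section
/- If R > 0 is irrational, then for every integer s \ge 1 there exists \rho \in (-1,1) such that no non-negative solution to the moment-matching equations (second-, first-, and zero-order conditions with parameters R, \rho, s) exists. Equivalently, sup over \rho admitting a solution is strictly less than 1 for each fixed s. -/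
open Finset

theorem irrational_ratio_fails_for_some_rho (R : ℝ) (hR : 0 < R) (hIrr : Irrational R)
    (s : ℕ) (hs : 1 ≤ s) :
    ∃ ρ : ℝ, ρ ∈ Set.Ioo (-1:ℝ) 1 ∧ ¬ ∃ p : ℤ × ℤ → ℝ, IsMMSol s R ρ p := by
  classical
  have hRne : R ≠ 0 := ne_of_gt hR
  have hRinv : Irrational R⁻¹ := hIrr.inv
  set c : ℤ × ℤ → ℝ := fun q => R * (R⁻¹ * (q.1 : ℝ) - (q.2 : ℝ))^2 with hc
  set T : Finset (ℤ × ℤ) := (grid s).filter (fun q => q.1 ≠ 0) with hT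
  have hsR : (0:ℝ) < (s:ℝ) := by exact_mod_cast Nat.lt_of_lt_of_le Nat.zero_lt_one hs
  -- c is positive on T
  have hcpos : ∀ q ∈ T, 0 < c q := by
    intro q hq
    have hq1 : q.1 ≠ 0 := (Finset.mem_filter.1 hq).2
    have hne : R⁻¹ * (q.1 : ℝ) - (q.2 : ℝ) ≠ 0 := by
      intro h
      have h1 : (q.1 : ℝ) ≠ 0 := Int.cast_ne_zero.2 hq1
      have : R⁻¹ = (q.2 : ℝ) / (q.1 : ℝ) := by field_simp at h ⊢; linarith
      have : R⁻¹ = ((q.2 / q.1 : ℚ) : ℝ) := by push_cast; exact this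
      exact hRinv ⟨(q.2 / q.1 : ℚ), this.symm⟩
    exact mul_pos hR (by positivity)
  -- T nonempty
  have hTne : T.Nonempty := by
    refine ⟨(1, 0), Finset.mem_filter.2 ⟨?_, by norm_num⟩⟩
    simp only [grid, Finset.mem_product, Finset.mem_Icc]
    constructor <;> constructor <;> omega
  obtain ⟨q0, hq0T, hmin⟩ := T.exists_min_image c hTne
  set δ : ℝ := c q0 with hδ
  have hδpos : 0 < δ := hcpos q0 hq0T
  set e : ℝ := δ / (s:ℝ)^2 with he
  have hepos : 0 < e := by positivity
  obtain ⟨B, hB⟩ : ∃ B : ℝ, B = 1 - R * e / 2 := ⟨_, rfl⟩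
  have hBlt : B < 1 := by
    have : 0 < R * e / 2 := by positivity
    linarith
  set ρ : ℝ := (max B 0 + 1) / 2 with hρ
  have hρlt1 : ρ < 1 := by
    have : max B 0 < 1 := max_lt hBlt one_pos
    rw [hρ]; linarith
  have hρgt : B < ρ := by
    have h1 : B ≤ max B 0 := le_max_left _ _
    have h2 : max B 0 < ρ := by
      have : max B 0 < 1 := max_lt hBlt one_pos
      rw [hρ]; linarith
    linarith
  have hρ0 : 0 ≤ ρ := by
    have : (0:ℝ) ≤ max B 0 := le_max_right _ _
    rw [hρ]; linarith
  refine ⟨ρ, ⟨by linarith, hρlt1⟩, ?_⟩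
  rintro ⟨p, hnn, h2i, h2j, hcross, _, _, _⟩
  -- the key sum identity
  have hsum : ∑ q ∈ grid s, c q * p q = 2 * R⁻¹ * (1 - ρ) := by
    have heq : ∀ q ∈ grid s, c q * p q =
        R⁻¹ * ((q.1:ℝ)^2 * p q) + R * ((q.2:ℝ)^2 * p q)
          - 2 * (((q.1:ℝ) * (q.2:ℝ)) * p q) := by
      intro q _
      rw [hc]
      field_simp
      ring
    rw [Finset.sum_congr rfl heq]
    rw [Finset.sum_sub_distrib, Finset.sum_add_distrib, ← Finset.mul_sum,
      ← Finset.mul_sum, ← Finset.mul_sum, h2i, h2j, hcross]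
    field_simp
    ring
  -- nonnegativity of p on T and lower bound
  have hpT : ∀ q ∈ T, 0 ≤ p q := by
    intro q hq
    have hq1 : q.1 ≠ 0 := (Finset.mem_filter.1 hq).2
    exact hnn q (Finset.mem_filter.1 hq).1 (by simp [Prod.ext_iff]; intro h; exact absurd h hq1)
  -- ∑ over T of i^2 p = 1
  have hTsum : ∑ q ∈ T, (q.1:ℝ)^2 * p q = 1 := by
    rw [hT, Finset.sum_filter_of_ne, h2i]
    intro q _ h
    intro hq1
    apply h
    rw [hq1]
    norm_num
  -- per-term bound on T
  have hstep : ∀ q ∈ T, (δ / (s:ℝ)^2) * ((q.1:ℝ)^2 * p q) ≤ c q * p q := by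
    intro q hq
    have hp := hpT q hq
    have hqg : q ∈ grid s := (Finset.mem_filter.1 hq).1
    have hbound : (q.1:ℝ)^2 ≤ (s:ℝ)^2 := by
      simp only [grid, Finset.mem_product, Finset.mem_Icc] at hqg
      have h1 : -((s:ℝ)) ≤ (q.1:ℝ) := by exact_mod_cast hqg.1.1
      have h2 : (q.1:ℝ) ≤ (s:ℝ) := by exact_mod_cast hqg.1.2
      nlinarith
    have hδc : δ ≤ c q := hmin q hq
    have h1 : (δ / (s:ℝ)^2) * (q.1:ℝ)^2 ≤ δ := by
      rw [div_mul_eq_mul_div, mul_comm, ← div_mul_eq_mul_div]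
      calc (q.1:ℝ)^2 / (s:ℝ)^2 * δ ≤ 1 * δ := by
            apply mul_le_mul_of_nonneg_right _ (le_of_lt hδpos)
            rw [div_le_one (by positivity)]; exact hbound
        _ = δ := one_mul δ
    calc (δ / (s:ℝ)^2) * ((q.1:ℝ)^2 * p q) = ((δ / (s:ℝ)^2) * (q.1:ℝ)^2) * p q := by ring
      _ ≤ δ * p q := mul_le_mul_of_nonneg_right h1 hp
      _ ≤ c q * p q := mul_le_mul_of_nonneg_right hδc hp
  have hlow : δ / (s:ℝ)^2 ≤ ∑ q ∈ T, c q * p q := by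
    calc δ / (s:ℝ)^2 = ∑ q ∈ T, (δ / (s:ℝ)^2) * ((q.1:ℝ)^2 * p q) := by
          rw [← Finset.mul_sum, hTsum, mul_one]
      _ ≤ ∑ q ∈ T, c q * p q := Finset.sum_le_sum hstep
  have hsub : ∑ q ∈ T, c q * p q ≤ ∑ q ∈ grid s, c q * p q := by
    apply Finset.sum_le_sum_of_subset_of_nonneg (Finset.filter_subset _ _)
    intro q hqg hqT
    have hq1 : q.1 = 0 := by
      by_contra h
      exact hqT (Finset.mem_filter.2 ⟨hqg, h⟩)
    by_cases hq2 : q.2 = 0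
    · have : q = (0,0) := Prod.ext hq1 hq2
      rw [this, hc]
      norm_num
    · have hp : 0 ≤ p q := hnn q hqg (by simp [Prod.ext_iff]; intro _; exact fun h => absurd h hq2)
      have : 0 ≤ c q := by rw [hc]; positivity
      exact mul_nonneg this hp
  -- conclude
  have hfinal : e ≤ 2 * R⁻¹ * (1 - ρ) := by
    rw [← hsum]; exact le_trans hlow hsub
  -- hence ρ ≤ B, contradicting B < ρ
  have h1 : (R / 2) * e ≤ (R / 2) * (2 * R⁻¹ * (1 - ρ)) :=
    mul_le_mul_of_nonneg_left hfinal (by positivity)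
  have h2 : (R / 2) * (2 * R⁻¹ * (1 - ρ)) = 1 - ρ := by field_simp
  rw [h2] at h1
  have : ρ ≤ B := by rw [hB]; linarith
  linarith
end

section
/- For s = 1, a non-negative moment-matching solution with parameters (R, \rho) exists if and only if |\rho| \le min(R, 1/R). -/
open Finset

lemma grid_one : grid 1 = {(-1,-1),(-1,0),(-1,1),(0,-1),(0,0),(0,1),(1,-1),(1,0),(1,1)} := by
  decide

lemma sum_grid_one (f : ℤ × ℤ → ℝ) :
    ∑ q ∈ grid 1, f q = f (-1,-1) + f (-1,0) + f (-1,1) + f (0,-1) + f (0,0) + f (0,1)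
      + f (1,-1) + f (1,0) + f (1,1) := by
  rw [grid_one]
  rw [Finset.sum_insert (by decide), Finset.sum_insert (by decide),
    Finset.sum_insert (by decide), Finset.sum_insert (by decide),
    Finset.sum_insert (by decide), Finset.sum_insert (by decide),
    Finset.sum_insert (by decide), Finset.sum_insert (by decide),
    Finset.sum_singleton]
  ring

set_option maxHeartbeats 4000000 in
theorem s_eq_one_criterion (R ρ : ℝ) (hR : 0 < R) (hρ : ρ ∈ Set.Icc (-1:ℝ) 1) :
    (∃ p : ℤ × ℤ → ℝ, IsMMSol 1 R ρ p) ↔ |ρ| ≤ min R R⁻¹ := by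
  have hR0 : R ≠ 0 := ne_of_gt hR
  have hRinv : 0 < R⁻¹ := inv_pos.2 hR
  constructor
  · rintro ⟨p, hnn, h2, h3, h4, h5, h6, h7⟩
    rw [sum_grid_one] at h2 h3 h4 h5 h6 h7
    norm_num at h2 h3 h4 h5 h6
    have ha := hnn (-1,-1) (by decide) (by decide)
    have hb := hnn (-1,0) (by decide) (by decide)
    have hc := hnn (-1,1) (by decide) (by decide)
    have hd := hnn (0,-1) (by decide) (by decide)
    have he := hnn (0,1) (by decide) (by decide)
    have hf := hnn (1,-1) (by decide) (by decide)
    have hg := hnn (1,0) (by decide) (by decide)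
    have hh : (0:ℝ) ≤ p (1,1) := hnn (1,1) (by decide) (by decide)
    have h1 : R * R⁻¹ = 1 := mul_inv_cancel₀ hR0
    -- key bound: |R⁻¹ * ρ| ≤ p(-1,-1)+p(-1,1)+p(1,-1)+p(1,1)
    have key : |R⁻¹ * ρ| ≤ p (-1,-1) + p (-1,1) + p (1,-1) + p (1,1) := by
      rw [abs_le]
      constructor <;> linarith
    have keyρ : |R⁻¹ * ρ| = R⁻¹ * |ρ| := by
      rw [abs_mul, abs_of_pos hRinv]
    rw [keyρ] at key
    have key1 : R⁻¹ * |ρ| ≤ 1 := by linarith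
    have key2 : R⁻¹ * |ρ| ≤ (R^2)⁻¹ := by linarith
    rw [le_min_iff]
    constructor
    · have := mul_le_mul_of_nonneg_left key1 hR.le
      rw [← mul_assoc, h1, one_mul, mul_one] at this
      exact this
    · have := mul_le_mul_of_nonneg_left key2 hR.le
      rw [← mul_assoc, h1, one_mul] at this
      calc |ρ| ≤ R * (R^2)⁻¹ := this
        _ = R⁻¹ := by field_simp
  · intro h
    rw [le_min_iff] at h
    have hr1 : |ρ| / R ≤ 1 := by rw [div_le_one hR]; exact h.1
    have hr2 : |ρ| / R ≤ R⁻¹ ^ 2 := by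
      rw [div_le_iff₀ hR]
      calc |ρ| ≤ R⁻¹ := h.2
        _ = R⁻¹^2 * R := by field_simp
    rcases le_total 0 ρ with hs | hs
    · have habs : |ρ| = ρ := abs_of_nonneg hs
      rw [habs] at hr1 hr2
      refine ⟨fun q => if q = (1,1) ∨ q = (-1,-1) then ρ/(2*R)
        else if q = (1,0) ∨ q = (-1,0) then (1 - ρ/R)/2
        else if q = (0,1) ∨ q = (0,-1) then (R⁻¹^2 - ρ/R)/2
        else if q = (0,0) then ρ/R - R⁻¹^2 else 0, ?_, ?_, ?_, ?_, ?_, ?_, ?_⟩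
      · intro q hq hq0
        have hρR : 0 ≤ ρ/(2*R) := div_nonneg hs (by positivity)
        have hr2' : ρ/R ≤ (R^2)⁻¹ := by rw [← inv_pow]; exact hr2
        rw [grid_one] at hq
        simp only [Finset.mem_insert, Finset.mem_singleton] at hq
        rcases hq with rfl|rfl|rfl|rfl|rfl|rfl|rfl|rfl|rfl <;>
          first
          | exact absurd rfl hq0
          | (norm_num [Prod.ext_iff] <;> first | exact hρR | linarith)
      all_goals
        rw [sum_grid_one]
        norm_num [Prod.ext_iff]
        try field_simp
        try ring
    · have habs : |ρ| = -ρ := abs_of_nonpos hs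
      rw [habs] at hr1 hr2
      have hr1' : -(ρ/R) ≤ 1 := by rw [← neg_div]; exact hr1
      have hr2' : -(ρ/R) ≤ R⁻¹^2 := by rw [← neg_div]; exact hr2
      refine ⟨fun q => if q = (1,-1) ∨ q = (-1,1) then -ρ/(2*R)
        else if q = (1,0) ∨ q = (-1,0) then (1 + ρ/R)/2
        else if q = (0,1) ∨ q = (0,-1) then (R⁻¹^2 + ρ/R)/2
        else if q = (0,0) then -(ρ/R) - R⁻¹^2 else 0, ?_, ?_, ?_, ?_, ?_, ?_, ?_⟩
      · intro q hq hq0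
        have hρR : 0 ≤ -ρ/(2*R) := div_nonneg (by linarith) (by positivity)
        have hρR' : -ρ/(2*R) = -(ρ/(2*R)) := neg_div _ _
        have hr2'' : -(ρ/R) ≤ (R^2)⁻¹ := by rw [← inv_pow]; exact hr2'
        rw [grid_one] at hq
        simp only [Finset.mem_insert, Finset.mem_singleton] at hq
        rcases hq with rfl|rfl|rfl|rfl|rfl|rfl|rfl|rfl|rfl <;>
          first
          | exact absurd rfl hq0
          | (norm_num [Prod.ext_iff] <;> first | exact hρR | linarith)
      all_goals
        rw [sum_grid_one]
        norm_num [Prod.ext_iff]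
        try field_simp
        try ring
end
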